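/- (Robustness of the smoothness metric, Case C_i < C_s.) Let S⁽ⁱ⁾, S⁽ⁿ⁾ ∈ ℝ^N be such that the noise vector n = S⁽ⁿ⁾ − S⁽ⁱ⁾ has exactly n_f nonzero entries, each equal to 2A or −2A, where A > 0. Write C_i = SM(S⁽ⁱ⁾) and suppose C_i < C_s. If n_f < (C_s − C_i)/(2·A·D^{3/2}·√Δ + 2·A·√(Δ·D)), then SM(S⁽ⁿ⁾) < C_s; i.e., the smoothness of the noisy signal remains below the lower endpoint C_s of the random-failure prediction interval, guaranteeing correct detection of the epidemic. -/

import Mathlib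

open scoped Classical

lemma sqrt_sum_sq_add_le (N : ℕ) (f g : ℕ → ℝ) :
    Real.sqrt (∑ j ∈ Finset.range N, (f j + g j) ^ 2) ≤
      Real.sqrt (∑ j ∈ Finset.range N, (f j) ^ 2) +
      Real.sqrt (∑ j ∈ Finset.range N, (g j) ^ 2) := by
  have h := norm_add_le (E := EuclideanSpace ℝ (Fin N))
    (WithLp.toLp 2 (fun j => f j)) (WithLp.toLp 2 (fun j => g j))
  simpa [EuclideanSpace.norm_eq, Real.norm_eq_abs, sq_abs,
    Finset.sum_range] using h


/-- The smoothness of a graph signal `S ∈ ℝ^N` with respect to the weighted adjacency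
matrix `a`: `SM(S) = ∑_{i} (∑_{j} a(i,j)·(S(j) − S(i))²)^{1/2}`. -/
noncomputable def smoothness (N : ℕ) (a : ℕ → ℕ → ℝ) (S : ℕ → ℝ) : ℝ :=
  ∑ i ∈ Finset.range N, Real.sqrt (∑ j ∈ Finset.range N, a i j * (S j - S i) ^ 2)

/-- **Robustness of the smoothness metric, Case `C_i < C_s`.**
If the noise vector `n = Sⁿ − Sⁱ` has exactly `n_f` nonzero entries, each equal to
`2A` or `−2A` with `A > 0`, `C_i = SM(Sⁱ) < C_s`, and
`n_f < (C_s − C_i)/(2·A·D^{3/2}·√Δ + 2·A·√(Δ·D))`, then `SM(Sⁿ) < C_s`. -/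
theorem smoothness_robust_below (N : ℕ) (hN : 1 ≤ N) (a : ℕ → ℕ → ℝ)
    (hsymm : ∀ i j, a i j = a j i) (hnn : ∀ i j, 0 ≤ a i j)
    (hdiag : ∀ i, a i i = 0)
    (Δ : ℝ) (hΔ : 0 < Δ) (haΔ : ∀ i j, a i j ≤ Δ)
    (D : ℝ) (hD : 1 ≤ D)
    (hdeg : ∀ i ∈ Finset.range N,
      ((((Finset.range N).filter (fun j => a i j ≠ 0)).card : ℝ)) ≤ D)
    (A : ℝ) (hA : 0 < A) (nf : ℕ)
    (Si Sn : ℕ → ℝ)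
    (F : Finset ℕ) (hFsub : F ⊆ Finset.range N) (hFcard : F.card = nf)
    (hFval : ∀ k ∈ F, Sn k - Si k = 2 * A ∨ Sn k - Si k = -(2 * A))
    (hF0 : ∀ k ∈ Finset.range N, k ∉ F → Sn k = Si k)
    (Cs : ℝ) (hCi : smoothness N a Si < Cs)
    (hnf : (nf : ℝ) < (Cs - smoothness N a Si) /
      (2 * A * D ^ ((3 : ℝ) / 2) * Real.sqrt Δ + 2 * A * Real.sqrt (Δ * D))) :
    smoothness N a Sn < Cs := by
  set n : ℕ → ℝ := fun k => Sn k - Si k with hn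
  have hnF : ∀ k ∈ F, n k ^ 2 = 4 * A ^ 2 := by
    intro k hk
    rcases hFval k hk with h | h <;> simp [hn, h] <;> ring
  have hn0 : ∀ k ∈ Finset.range N, k ∉ F → n k = 0 := by
    intro k hk hk'
    simp [hn, hF0 k hk hk']
  have hD0 : (0:ℝ) < D := lt_of_lt_of_le one_pos hD
  -- square-root trick
  have hsq : ∀ i j (x : ℝ), (Real.sqrt (a i j) * x) ^ 2 = a i j * x ^ 2 := by
    intro i j x
    rw [mul_pow, Real.sq_sqrt (hnn i j)]
  -- pointwise triangle inequality: noisy ≤ clean + noise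
  have key : ∀ i, Real.sqrt (∑ j ∈ Finset.range N, a i j * (Sn j - Sn i) ^ 2) ≤
      Real.sqrt (∑ j ∈ Finset.range N, a i j * (Si j - Si i) ^ 2) +
      Real.sqrt (∑ j ∈ Finset.range N, a i j * (n j - n i) ^ 2) := by
    intro i
    have h := sqrt_sum_sq_add_le N (fun j => Real.sqrt (a i j) * (Si j - Si i))
      (fun j => Real.sqrt (a i j) * (n j - n i))
    have e1 : ∀ j, (Real.sqrt (a i j) * (Si j - Si i) +
        Real.sqrt (a i j) * (n j - n i)) ^ 2 = a i j * (Sn j - Sn i) ^ 2 := by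
      intro j
      have : Real.sqrt (a i j) * (Si j - Si i) + Real.sqrt (a i j) * (n j - n i)
          = Real.sqrt (a i j) * (Sn j - Sn i) := by simp [hn]; ring
      rw [this, hsq]
    calc Real.sqrt (∑ j ∈ Finset.range N, a i j * (Sn j - Sn i) ^ 2)
        = Real.sqrt (∑ j ∈ Finset.range N,
            (Real.sqrt (a i j) * (Si j - Si i) + Real.sqrt (a i j) * (n j - n i)) ^ 2) := by
          rw [Finset.sum_congr rfl (fun j _ => (e1 j).symm)]
      _ ≤ _ := by
          refine h.trans_eq ?_
          congr 1 <;> exact congrArg Real.sqrt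
            (Finset.sum_congr rfl (fun j _ => by rw [hsq]))
  -- noise pointwise triangle
  have key2 : ∀ i, Real.sqrt (∑ j ∈ Finset.range N, a i j * (n j - n i) ^ 2) ≤
      Real.sqrt (∑ j ∈ Finset.range N, a i j * n j ^ 2) +
      Real.sqrt (∑ j ∈ Finset.range N, a i j * n i ^ 2) := by
    intro i
    have h := sqrt_sum_sq_add_le N (fun j => Real.sqrt (a i j) * n j)
      (fun j => Real.sqrt (a i j) * (- n i))
    have e1 : ∀ j, (Real.sqrt (a i j) * n j + Real.sqrt (a i j) * (- n i)) ^ 2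
        = a i j * (n j - n i) ^ 2 := by
      intro j
      have : Real.sqrt (a i j) * n j + Real.sqrt (a i j) * (- n i)
          = Real.sqrt (a i j) * (n j - n i) := by ring
      rw [this, hsq]
    calc Real.sqrt (∑ j ∈ Finset.range N, a i j * (n j - n i) ^ 2)
        = Real.sqrt (∑ j ∈ Finset.range N,
            (Real.sqrt (a i j) * n j + Real.sqrt (a i j) * (- n i)) ^ 2) := by
          rw [Finset.sum_congr rfl (fun j _ => e1 j)]
      _ ≤ _ := by
          refine h.trans_eq ?_
          congr 1 <;> refine congrArg Real.sqrt (Finset.sum_congr rfl (fun j _ => ?_))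
          · rw [hsq]
          · rw [hsq]; ring_nf
  -- T1 bound per node
  have hT1 : ∀ i, Real.sqrt (∑ j ∈ Finset.range N, a i j * n j ^ 2) ≤
      2 * A * Real.sqrt Δ * ((F.filter fun j => a i j ≠ 0).card : ℝ) := by
    intro i
    set S : Finset ℕ := F.filter fun j => a i j ≠ 0 with hS
    have hSsub : S ⊆ Finset.range N := (Finset.filter_subset _ _).trans hFsub
    have hsum : ∑ j ∈ Finset.range N, a i j * n j ^ 2 = ∑ j ∈ S, a i j * n j ^ 2 := by
      refine (Finset.sum_subset hSsub ?_).symm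
      intro j hj hj'
      by_cases hjF : j ∈ F
      · have : a i j = 0 := by
          by_contra h0
          exact hj' (Finset.mem_filter.mpr ⟨hjF, h0⟩)
        simp [this]
      · simp [hn0 j hj hjF]
    have hbound : ∑ j ∈ S, a i j * n j ^ 2 ≤ (S.card : ℝ) * (Δ * (4 * A ^ 2)) := by
      rw [Finset.card_eq_sum_ones, Nat.cast_sum]
      rw [Finset.sum_mul]
      refine Finset.sum_le_sum (fun j hj => ?_)
      have hjF : j ∈ F := (Finset.mem_filter.mp hj).1
      rw [hnF j hjF]
      have := haΔ i j
      have := hnn i j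
      push_cast
      nlinarith [sq_nonneg A]
    have h4 : Real.sqrt ((S.card : ℝ) * (Δ * (4 * A ^ 2))) =
        2 * A * Real.sqrt Δ * Real.sqrt (S.card : ℝ) := by
      rw [show (S.card : ℝ) * (Δ * (4 * A ^ 2)) = (2 * A) ^ 2 * (Δ * (S.card : ℝ)) by ring,
        Real.sqrt_mul (by positivity), Real.sqrt_mul hΔ.le,
        Real.sqrt_sq (by positivity)]
      ring
    have hsqrtcard : Real.sqrt (S.card : ℝ) ≤ (S.card : ℝ) := by
      rcases Nat.eq_zero_or_pos S.card with h | h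
      · simp [h]
      · have h1 : (1:ℝ) ≤ (S.card:ℝ) := by exact_mod_cast h
        calc Real.sqrt (S.card:ℝ) ≤ Real.sqrt ((S.card:ℝ)^2) :=
              Real.sqrt_le_sqrt (by nlinarith)
          _ = (S.card:ℝ) := Real.sqrt_sq (by positivity)
    calc Real.sqrt (∑ j ∈ Finset.range N, a i j * n j ^ 2)
        ≤ Real.sqrt ((S.card : ℝ) * (Δ * (4 * A ^ 2))) := by
          rw [hsum]; exact Real.sqrt_le_sqrt hbound
      _ = 2 * A * Real.sqrt Δ * Real.sqrt (S.card : ℝ) := h4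
      _ ≤ 2 * A * Real.sqrt Δ * (S.card : ℝ) := by
          refine mul_le_mul_of_nonneg_left hsqrtcard (by positivity)
  -- sum of filtered cards
  have hcards : ∑ i ∈ Finset.range N, ((F.filter fun j => a i j ≠ 0).card : ℝ)
      ≤ (nf : ℝ) * D := by
    have : ∀ i, ((F.filter fun j => a i j ≠ 0).card : ℝ)
        = ∑ j ∈ F, (if a i j ≠ 0 then (1:ℝ) else 0) := by
      intro i
      rw [Finset.card_filter]
      push_cast
      rfl
    calc ∑ i ∈ Finset.range N, ((F.filter fun j => a i j ≠ 0).card : ℝ)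
        = ∑ j ∈ F, ∑ i ∈ Finset.range N, (if a i j ≠ 0 then (1:ℝ) else 0) := by
          rw [Finset.sum_congr rfl (fun i _ => this i)]
          exact Finset.sum_comm
      _ ≤ ∑ j ∈ F, D := by
          refine Finset.sum_le_sum (fun j hj => ?_)
          have hjN : j ∈ Finset.range N := hFsub hj
          have : ∑ i ∈ Finset.range N, (if a i j ≠ 0 then (1:ℝ) else 0)
              = (((Finset.range N).filter (fun i => a j i ≠ 0)).card : ℝ) := by
            rw [Finset.card_filter]
            push_cast
            refine Finset.sum_congr rfl (fun i _ => ?_)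
            rw [hsymm i j]
          rw [this]
          exact hdeg j hjN
      _ = (nf : ℝ) * D := by rw [Finset.sum_const, hFcard]; simp [mul_comm]
  -- T2 bound
  have hT2 : ∑ i ∈ Finset.range N, Real.sqrt (∑ j ∈ Finset.range N, a i j * n i ^ 2)
      ≤ (nf : ℝ) * (2 * A * Real.sqrt (Δ * D)) := by
    have hzero : ∀ i ∈ Finset.range N, i ∉ F →
        Real.sqrt (∑ j ∈ Finset.range N, a i j * n i ^ 2) = 0 := by
      intro i hi hi'
      simp [hn0 i hi hi']
    have hsum : ∑ i ∈ Finset.range N, Real.sqrt (∑ j ∈ Finset.range N, a i j * n i ^ 2)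
        = ∑ i ∈ F, Real.sqrt (∑ j ∈ Finset.range N, a i j * n i ^ 2) :=
      (Finset.sum_subset hFsub (fun i hi hi' => hzero i hi hi')).symm
    rw [hsum]
    have hterm : ∀ i ∈ F, Real.sqrt (∑ j ∈ Finset.range N, a i j * n i ^ 2)
        ≤ 2 * A * Real.sqrt (Δ * D) := by
      intro i hi
      have hrow : ∑ j ∈ Finset.range N, a i j ≤ Δ * D := by
        have h1 : ∑ j ∈ Finset.range N, a i j
            = ∑ j ∈ (Finset.range N).filter (fun j => a i j ≠ 0), a i j := by
          refine (Finset.sum_subset (Finset.filter_subset _ _) ?_).symm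
          intro j hj hj'
          by_contra h0
          exact hj' (Finset.mem_filter.mpr ⟨hj, h0⟩)
        have h2 : ∑ j ∈ (Finset.range N).filter (fun j => a i j ≠ 0), a i j
            ≤ (((Finset.range N).filter (fun j => a i j ≠ 0)).card : ℝ) * Δ := by
          rw [Finset.card_eq_sum_ones, Nat.cast_sum, Finset.sum_mul]
          refine Finset.sum_le_sum (fun j _ => ?_)
          have := haΔ i j; push_cast; linarith
        have h3 := hdeg i (hFsub hi)
        calc ∑ j ∈ Finset.range N, a i j
            ≤ (((Finset.range N).filter (fun j => a i j ≠ 0)).card : ℝ) * Δ := by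
              rw [h1]; exact h2
          _ ≤ D * Δ := mul_le_mul_of_nonneg_right h3 hΔ.le
          _ = Δ * D := mul_comm _ _
      have hin : ∑ j ∈ Finset.range N, a i j * n i ^ 2
          = (4 * A ^ 2) * ∑ j ∈ Finset.range N, a i j := by
        rw [Finset.mul_sum]
        refine Finset.sum_congr rfl (fun j _ => ?_)
        rw [hnF i hi]; ring
      calc Real.sqrt (∑ j ∈ Finset.range N, a i j * n i ^ 2)
          ≤ Real.sqrt ((4 * A ^ 2) * (Δ * D)) := by
            refine Real.sqrt_le_sqrt ?_
            rw [hin]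
            refine mul_le_mul_of_nonneg_left hrow (by positivity)
        _ = 2 * A * Real.sqrt (Δ * D) := by
            rw [show (4 * A ^ 2) * (Δ * D) = (2 * A) ^ 2 * (Δ * D) by ring,
              Real.sqrt_mul (by positivity), Real.sqrt_sq (by positivity)]
    calc ∑ i ∈ F, Real.sqrt (∑ j ∈ Finset.range N, a i j * n i ^ 2)
        ≤ ∑ i ∈ F, 2 * A * Real.sqrt (Δ * D) := Finset.sum_le_sum hterm
      _ = (nf : ℝ) * (2 * A * Real.sqrt (Δ * D)) := by
          rw [Finset.sum_const, hFcard]; simp [mul_comm]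
  -- assemble
  have hNoise : ∑ i ∈ Finset.range N,
      Real.sqrt (∑ j ∈ Finset.range N, a i j * (n j - n i) ^ 2)
      ≤ (nf : ℝ) * (2 * A * D ^ ((3:ℝ)/2) * Real.sqrt Δ + 2 * A * Real.sqrt (Δ * D)) := by
    have step1 : ∑ i ∈ Finset.range N,
        Real.sqrt (∑ j ∈ Finset.range N, a i j * (n j - n i) ^ 2)
        ≤ (∑ i ∈ Finset.range N, Real.sqrt (∑ j ∈ Finset.range N, a i j * n j ^ 2))
          + ∑ i ∈ Finset.range N, Real.sqrt (∑ j ∈ Finset.range N, a i j * n i ^ 2) := by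
      rw [← Finset.sum_add_distrib]
      exact Finset.sum_le_sum (fun i _ => key2 i)
    have step2 : ∑ i ∈ Finset.range N, Real.sqrt (∑ j ∈ Finset.range N, a i j * n j ^ 2)
        ≤ 2 * A * Real.sqrt Δ * ((nf : ℝ) * D) := by
      calc ∑ i ∈ Finset.range N, Real.sqrt (∑ j ∈ Finset.range N, a i j * n j ^ 2)
          ≤ ∑ i ∈ Finset.range N,
              (2 * A * Real.sqrt Δ * ((F.filter fun j => a i j ≠ 0).card : ℝ)) :=
            Finset.sum_le_sum (fun i _ => hT1 i)
        _ = 2 * A * Real.sqrt Δ *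
            ∑ i ∈ Finset.range N, ((F.filter fun j => a i j ≠ 0).card : ℝ) := by
            rw [Finset.mul_sum]
        _ ≤ 2 * A * Real.sqrt Δ * ((nf : ℝ) * D) :=
            mul_le_mul_of_nonneg_left hcards (by positivity)
    have hDD : D ≤ D ^ ((3:ℝ)/2) := by
      calc D = D ^ (1:ℝ) := (Real.rpow_one D).symm
        _ ≤ D ^ ((3:ℝ)/2) := Real.rpow_le_rpow_of_exponent_le hD (by norm_num)
    have : 2 * A * Real.sqrt Δ * ((nf : ℝ) * D)
        ≤ (nf : ℝ) * (2 * A * D ^ ((3:ℝ)/2) * Real.sqrt Δ) := by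
      have hs : (0:ℝ) ≤ Real.sqrt Δ := Real.sqrt_nonneg _
      have hnf0 : (0:ℝ) ≤ (nf : ℝ) := Nat.cast_nonneg _
      nlinarith [mul_le_mul_of_nonneg_left hDD (by positivity :
        (0:ℝ) ≤ 2 * A * Real.sqrt Δ * (nf : ℝ))]
    calc ∑ i ∈ Finset.range N,
        Real.sqrt (∑ j ∈ Finset.range N, a i j * (n j - n i) ^ 2)
        ≤ 2 * A * Real.sqrt Δ * ((nf : ℝ) * D)
          + (nf : ℝ) * (2 * A * Real.sqrt (Δ * D)) :=
          step1.trans (add_le_add step2 hT2)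
      _ ≤ (nf : ℝ) * (2 * A * D ^ ((3:ℝ)/2) * Real.sqrt Δ)
          + (nf : ℝ) * (2 * A * Real.sqrt (Δ * D)) := by linarith
      _ = (nf : ℝ) * (2 * A * D ^ ((3:ℝ)/2) * Real.sqrt Δ
          + 2 * A * Real.sqrt (Δ * D)) := by ring
  have hSM : smoothness N a Sn ≤ smoothness N a Si +
      ∑ i ∈ Finset.range N, Real.sqrt (∑ j ∈ Finset.range N, a i j * (n j - n i) ^ 2) := by
    unfold smoothness
    rw [← Finset.sum_add_distrib]
    exact Finset.sum_le_sum (fun i _ => key i)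
  have hd : (0:ℝ) < 2 * A * D ^ ((3:ℝ)/2) * Real.sqrt Δ + 2 * A * Real.sqrt (Δ * D) := by
    have h1 : (0:ℝ) < Real.sqrt Δ := Real.sqrt_pos.mpr hΔ
    have h2 : (0:ℝ) < Real.sqrt (Δ * D) := Real.sqrt_pos.mpr (by positivity)
    have h3 : (0:ℝ) < D ^ ((3:ℝ)/2) := Real.rpow_pos_of_pos hD0 _
    positivity
  have hfinal := (lt_div_iff₀ hd).mp hnf
  calc smoothness N a Sn
      ≤ smoothness N a Si + ∑ i ∈ Finset.range N,
        Real.sqrt (∑ j ∈ Finset.range N, a i j * (n j - n i) ^ 2) := hSM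
    _ ≤ smoothness N a Si + (nf : ℝ) * (2 * A * D ^ ((3:ℝ)/2) * Real.sqrt Δ
        + 2 * A * Real.sqrt (Δ * D)) := by linarith
    _ < Cs := by linarith
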